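/- Let α be a real random variable with |α| ≤ B almost surely for some B < ∞, let Φ(λ) = 𝔼[ e^{α+λ}/(1+e^{α+λ}) ], and let λ = Φ^{-1} : (0,1) → ℝ be the inverse function (which exists since Φ is a strictly increasing continuous bijection from ℝ onto (0,1)). Then λ is differentiable on (0,1) with λ'(m) > 0, and there is a constant C = C(B) < ∞ such that λ'(m) ≤ C / (m(1−m)) for all m ∈ (0,1). -/

import Mathlib

noncomputable section
open MeasureTheory Real

def sig (x : ℝ) : ℝ := Real.exp x / (1 + Real.exp x)

lemma one_add_exp_pos (x : ℝ) : 0 < 1 + Real.exp x := by positivity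

lemma sig_pos (x : ℝ) : 0 < sig x := div_pos (Real.exp_pos x) (one_add_exp_pos x)

lemma sig_lt_one (x : ℝ) : sig x < 1 := by
  rw [sig, div_lt_one (one_add_exp_pos x)]; linarith

lemma sig_mono : Monotone sig := by
  intro x y hxy
  rw [sig, sig, div_le_div_iff₀ (one_add_exp_pos x) (one_add_exp_pos y)]
  nlinarith [Real.exp_le_exp.2 hxy, Real.exp_pos x, Real.exp_pos y]

lemma hasDerivAt_sig (x : ℝ) : HasDerivAt sig (sig x * (1 - sig x)) x := by
  have h := (Real.hasDerivAt_exp x).div ((Real.hasDerivAt_exp x).const_add 1) (one_add_exp_pos x).ne'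
  refine h.congr_deriv ?_
  have h1 := (one_add_exp_pos x).ne'
  unfold sig
  field_simp

lemma sig_shift (x t : ℝ) (ht : 0 ≤ t) : sig (x + t) ≤ Real.exp t * sig x := by
  rw [sig, sig, ← mul_div_assoc, div_le_div_iff₀ (one_add_exp_pos _) (one_add_exp_pos x),
    Real.exp_add]
  nlinarith [Real.exp_add x t, Real.one_le_exp ht, Real.exp_pos x, Real.exp_pos t,
    mul_nonneg (mul_nonneg (Real.exp_pos x).le (Real.exp_pos x).le)
      (mul_nonneg (Real.exp_pos t).le (sub_nonneg.2 (Real.one_le_exp ht)))]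

lemma one_sub_sig_shift (x t : ℝ) (ht : 0 ≤ t) : 1 - sig x ≤ Real.exp t * (1 - sig (x + t)) := by
  have h1 : 1 - sig x = 1 / (1 + Real.exp x) := by rw [sig]; field_simp; ring
  have h2 : 1 - sig (x + t) = 1 / (1 + Real.exp (x + t)) := by rw [sig]; field_simp; ring
  rw [h1, h2, mul_one_div, div_le_div_iff₀ (one_add_exp_pos x) (one_add_exp_pos (x+t))]
  have h3 : 1 ≤ Real.exp t := Real.one_le_exp ht
  nlinarith [Real.exp_add x t, Real.exp_pos x, Real.exp_pos t]

lemma sig_continuous : Continuous sig :=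
  Real.continuous_exp.div (continuous_const.add Real.continuous_exp)
    fun x => (one_add_exp_pos x).ne'

/-- `Φ(λ) = 𝔼[ e^{α+λ}/(1+e^{α+λ}) ]`, the annealed density as a function of the chemical
potential `λ`. -/
def Phi {Ω : Type*} [MeasurableSpace Ω] (P : Measure Ω) (α : Ω → ℝ) (lam : ℝ) : ℝ :=
  ∫ ω, Real.exp (α ω + lam) / (1 + Real.exp (α ω + lam)) ∂P

theorem stmt_18 (Ω : Type) [MeasurableSpace Ω] (P : Measure Ω) [IsProbabilityMeasure P]
    (B : ℝ) (α : Ω → ℝ) (hαm : Measurable α) (hαB : ∀ᵐ ω ∂P, |α ω| ≤ B)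
    (lam : ℝ → ℝ) (hlam : ∀ m ∈ Set.Ioo (0 : ℝ) 1, Phi P α (lam m) = m) :
    ∃ C : ℝ, ∀ m ∈ Set.Ioo (0 : ℝ) 1,
      ∃ dm : ℝ, HasDerivAt lam dm m ∧ 0 < dm ∧ dm ≤ C / (m * (1 - m)) := by
  have hB : 0 ≤ B := by
    obtain ⟨ω, hω⟩ := hαB.exists
    exact (abs_nonneg _).trans hω
  have hPhiEq : ∀ l, Phi P α l = ∫ ω, sig (α ω + l) ∂P := fun l => rfl
  have hgm : ∀ l, AEStronglyMeasurable (fun ω => sig (α ω + l)) P := fun l =>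
    (sig_continuous.measurable.comp (hαm.add_const l)).aestronglyMeasurable
  have hgint : ∀ l, Integrable (fun ω => sig (α ω + l)) P := fun l =>
    (integrable_const (1:ℝ)).mono' (hgm l) (Filter.Eventually.of_forall fun ω => by
      rw [Real.norm_eq_abs, abs_of_pos (sig_pos _)]; exact (sig_lt_one _).le)
  -- bounds on Phi
  have hlow : ∀ l, sig (l - B) ≤ Phi P α l := by
    intro l
    rw [hPhiEq]
    calc sig (l - B) = ∫ _ω, sig (l - B) ∂P := by simp
    _ ≤ ∫ ω, sig (α ω + l) ∂P := integral_mono_ae (integrable_const _) (hgint l)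
        (hαB.mono fun ω hω => sig_mono (by have := (abs_le.1 hω).1; linarith))
  have hupp : ∀ l, Phi P α l ≤ sig (l + B) := by
    intro l
    rw [hPhiEq]
    calc ∫ ω, sig (α ω + l) ∂P ≤ ∫ _ω, sig (l + B) ∂P := integral_mono_ae (hgint l)
          (integrable_const _)
          (hαB.mono fun ω hω => sig_mono (by have := (abs_le.1 hω).2; linarith))
    _ = sig (l + B) := by simp
  have hPhi01 : ∀ l, Phi P α l ∈ Set.Ioo (0:ℝ) 1 := fun l =>
    ⟨lt_of_lt_of_le (sig_pos _) (hlow l), lt_of_le_of_lt (hupp l) (sig_lt_one _)⟩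
  -- pointwise lower bound on sig'
  have hptwise : ∀ l, ∀ᵐ ω ∂P, Real.exp (-(4*B)) * (Phi P α l * (1 - Phi P α l))
      ≤ sig (α ω + l) * (1 - sig (α ω + l)) := by
    intro l
    obtain ⟨hP0, hP1⟩ := hPhi01 l
    have h1 : Phi P α l ≤ Real.exp (2*B) * sig (l - B) := by
      have := sig_shift (l - B) (2*B) (by linarith)
      have h2 : l - B + 2*B = l + B := by ring
      rw [h2] at this
      exact (hupp l).trans this
    have h2 : 1 - Phi P α l ≤ Real.exp (2*B) * (1 - sig (l + B)) := by
      have := one_sub_sig_shift (l - B) (2*B) (by linarith)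
      have h3 : l - B + 2*B = l + B := by ring
      rw [h3] at this
      have h4 : 1 - Phi P α l ≤ 1 - sig (l - B) := by linarith [hlow l]
      linarith
    have hE : (0:ℝ) < Real.exp (2*B) := Real.exp_pos _
    have hA : Real.exp (-(2*B)) * Phi P α l ≤ sig (l - B) := by
      rw [Real.exp_neg]
      rw [inv_mul_le_iff₀ hE] at *
      · linarith [h1]
    have hA2 : Real.exp (-(2*B)) * (1 - Phi P α l) ≤ 1 - sig (l + B) := by
      rw [Real.exp_neg, inv_mul_le_iff₀ hE]
      linarith [h2]
    refine hαB.mono fun ω hω => ?_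
    have hs1 : sig (l - B) ≤ sig (α ω + l) :=
      sig_mono (by have := (abs_le.1 hω).1; linarith)
    have hs2 : sig (α ω + l) ≤ sig (l + B) :=
      sig_mono (by have := (abs_le.1 hω).2; linarith)
    have e4 : Real.exp (-(4*B)) = Real.exp (-(2*B)) * Real.exp (-(2*B)) := by
      rw [← Real.exp_add]; ring_nf
    rw [e4]
    have hx : (0:ℝ) ≤ Real.exp (-(2*B)) * Phi P α l :=
      mul_nonneg (Real.exp_pos _).le hP0.le
    have hy : (0:ℝ) ≤ Real.exp (-(2*B)) * (1 - Phi P α l) :=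
      mul_nonneg (Real.exp_pos _).le (by linarith)
    calc Real.exp (-(2*B)) * Real.exp (-(2*B)) * (Phi P α l * (1 - Phi P α l))
        = (Real.exp (-(2*B)) * Phi P α l) * (Real.exp (-(2*B)) * (1 - Phi P α l)) := by ring
    _ ≤ sig (α ω + l) * (1 - sig (α ω + l)) :=
        mul_le_mul (hA.trans hs1) (hA2.trans (by linarith : 1 - sig (l + B) ≤ 1 - sig (α ω + l)))
          hy (sig_pos _).le
  -- derivative of Phi
  have hF'm : ∀ l, AEStronglyMeasurable (fun ω => sig (α ω + l) * (1 - sig (α ω + l))) P :=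
    fun l => (hgm l).mul ((aestronglyMeasurable_const).sub (hgm l))
  have hderiv : ∀ l, Integrable (fun ω => sig (α ω + l) * (1 - sig (α ω + l))) P ∧
      HasDerivAt (Phi P α) (∫ ω, sig (α ω + l) * (1 - sig (α ω + l)) ∂P) l := by
    intro l
    have key := hasDerivAt_integral_of_dominated_loc_of_deriv_le (μ := P) (x₀ := l)
      (F := fun x ω => sig (α ω + x))
      (F' := fun x ω => sig (α ω + x) * (1 - sig (α ω + x)))
      (bound := fun _ => 1) Filter.univ_mem
      (Filter.Eventually.of_forall fun x => hgm x)
      (hgint l)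
      (hF'm l)
      (ae_of_all _ fun ω x _ => by
        show ‖sig (α ω + x) * (1 - sig (α ω + x))‖ ≤ 1
        have h0 := sig_pos (α ω + x)
        have h1 := sig_lt_one (α ω + x)
        rw [Real.norm_eq_abs, abs_of_nonneg (by nlinarith)]
        nlinarith)
      (integrable_const 1)
      (ae_of_all _ fun ω x _ => by
        have h1 : HasDerivAt (fun y : ℝ => α ω + y) 1 x := by
          simpa using (hasDerivAt_id x).const_add (α ω)
        simpa [Function.comp_def] using (hasDerivAt_sig (α ω + x)).comp x h1)
    exact key
  set D : ℝ → ℝ := fun l => ∫ ω, sig (α ω + l) * (1 - sig (α ω + l)) ∂P with hD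
  have hD_lb : ∀ l, Real.exp (-(4*B)) * (Phi P α l * (1 - Phi P α l)) ≤ D l := by
    intro l
    calc Real.exp (-(4*B)) * (Phi P α l * (1 - Phi P α l))
        = ∫ _ω, Real.exp (-(4*B)) * (Phi P α l * (1 - Phi P α l)) ∂P := by simp
    _ ≤ D l := integral_mono_ae (integrable_const _) (hderiv l).1 (hptwise l)
  have hD_pos : ∀ l, 0 < D l := by
    intro l
    obtain ⟨h0, h1⟩ := hPhi01 l
    refine lt_of_lt_of_le ?_ (hD_lb l)
    exact mul_pos (Real.exp_pos _) (mul_pos h0 (by linarith))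
  -- Phi strictly monotone
  have hSM : StrictMono (Phi P α) := by
    refine strictMono_of_deriv_pos fun l => ?_
    rw [(hderiv l).2.deriv]
    exact hD_pos l
  -- lam strictly monotone on Ioo, with image all of ℝ
  have hlamSM : StrictMonoOn lam (Set.Ioo 0 1) := by
    intro m1 h1 m2 h2 h12
    refine hSM.lt_iff_lt.1 ?_
    rw [hlam m1 h1, hlam m2 h2]; exact h12
  have himg : lam '' Set.Ioo 0 1 = Set.univ := by
    refine Set.eq_univ_of_forall fun l => ?_
    refine ⟨Phi P α l, hPhi01 l, ?_⟩
    have : Phi P α (lam (Phi P α l)) = Phi P α l := hlam _ (hPhi01 l)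
    exact hSM.injective this
  refine ⟨Real.exp (4*B), fun m hm => ?_⟩
  have hnhds : Set.Ioo (0:ℝ) 1 ∈ nhds m := Ioo_mem_nhds hm.1 hm.2
  have hcont : ContinuousAt lam m :=
    hlamSM.continuousAt_of_image_mem_nhds hnhds (by rw [himg]; exact Filter.univ_mem)
  have hev : ∀ᶠ y in nhds m, Phi P α (lam y) = y := Filter.eventually_of_mem hnhds hlam
  have hDer : HasDerivAt lam (D (lam m))⁻¹ m :=
    (hderiv (lam m)).2.of_local_left_inverse hcont (hD_pos (lam m)).ne' hev
  refine ⟨(D (lam m))⁻¹, hDer, inv_pos.2 (hD_pos (lam m)), ?_⟩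
  have hkey : Real.exp (-(4*B)) * (m * (1 - m)) ≤ D (lam m) := by
    have := hD_lb (lam m)
    rwa [hlam m hm] at this
  have hpos : 0 < Real.exp (-(4*B)) * (m * (1 - m)) := by
    exact mul_pos (Real.exp_pos _) (mul_pos hm.1 (by linarith [hm.2]))
  calc (D (lam m))⁻¹ ≤ (Real.exp (-(4*B)) * (m * (1 - m)))⁻¹ :=
        inv_anti₀ hpos hkey
  _ = Real.exp (4*B) / (m * (1 - m)) := by
      rw [mul_inv, Real.exp_neg, inv_inv, div_eq_mul_inv]
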